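/- Let F(z) = (z−z_1)^{m_1}(z−z_2)^{m_2}(z−z_3)^{m_3} with three distinct zeros and n = m_1+m_2+m_3, and let w_1, w_2 be the zeros of F' that are not zeros of F. Then the three vectors v_1 = (√m_j/(w_1−z_j))_j, v_2 = (conj(√m_j/(w_2−z_j)))_j, and v_3 = (√m_1,√m_2,√m_3) are mutually orthogonal in ℂ³. -/

import Mathlib

open Finset

lemma stmt_11_key (z : Fin 3 → ℂ) (m : Fin 3 → ℕ) (hm : ∀ j, 0 < m j)
    (f : ℂ → ℂ) (hf : ∀ x, f x = ∏ j, (x - z j) ^ (m j))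
    (w : ℂ) (hfw : f w ≠ 0) (hd : deriv f w = 0) :
    ∑ j, (m j : ℂ) / (w - z j) = 0 := by
  have hne : ∀ j, w - z j ≠ 0 := by
    intro j h
    apply hfw
    rw [hf]
    apply Finset.prod_eq_zero (Finset.mem_univ j)
    rw [h, zero_pow (hm j).ne']
  have hderiv : ∀ j, HasDerivAt (fun x => (x - z j) ^ (m j))
      ((m j : ℂ) * (w - z j) ^ (m j - 1)) w := by
    intro j
    simpa using ((hasDerivAt_id w).sub_const (z j)).fun_pow (m j)
  have hF : HasDerivAt f
      ((((m 0 : ℂ) * (w - z 0) ^ (m 0 - 1)) * (w - z 1) ^ (m 1)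
        + (w - z 0) ^ (m 0) * ((m 1 : ℂ) * (w - z 1) ^ (m 1 - 1))) * (w - z 2) ^ (m 2)
        + ((w - z 0) ^ (m 0) * (w - z 1) ^ (m 1))
          * ((m 2 : ℂ) * (w - z 2) ^ (m 2 - 1))) w := by
    have h := ((hderiv 0).mul (hderiv 1)).mul (hderiv 2)
    have hfun : f = fun x => ((x - z 0) ^ (m 0) * (x - z 1) ^ (m 1)) * (x - z 2) ^ (m 2) := by
      funext x
      rw [hf, Fin.prod_univ_three]
    rw [hfun]
    exact h
  have E := hF.deriv
  rw [hd] at E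
  -- rewrite a^(m j) = a^(m j - 1) * a
  have hpow : ∀ j, (w - z j) ^ (m j) = (w - z j) ^ (m j - 1) * (w - z j) := by
    intro j
    nth_rewrite 1 [← Nat.sub_add_cancel (hm j)]
    rw [pow_succ]
  rw [hpow 0, hpow 1, hpow 2] at E
  have hp0 : (w - z 0) ^ (m 0 - 1) ≠ 0 := pow_ne_zero _ (hne 0)
  have hp1 : (w - z 1) ^ (m 1 - 1) ≠ 0 := pow_ne_zero _ (hne 1)
  have hp2 : (w - z 2) ^ (m 2 - 1) ≠ 0 := pow_ne_zero _ (hne 2)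
  have G : (m 0 : ℂ) * (w - z 1) * (w - z 2) + (m 1 : ℂ) * (w - z 0) * (w - z 2)
      + (m 2 : ℂ) * (w - z 0) * (w - z 1) = 0 := by
    have hE' : (w - z 0) ^ (m 0 - 1) * (w - z 1) ^ (m 1 - 1) * (w - z 2) ^ (m 2 - 1) *
        ((m 0 : ℂ) * (w - z 1) * (w - z 2) + (m 1 : ℂ) * (w - z 0) * (w - z 2)
          + (m 2 : ℂ) * (w - z 0) * (w - z 1)) = 0 := by
      linear_combination -E
    rcases mul_eq_zero.mp hE' with h | h
    · rcases mul_eq_zero.mp h with h' | h'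
      · rcases mul_eq_zero.mp h' with h'' | h''
        · exact absurd h'' hp0
        · exact absurd h'' hp1
      · exact absurd h' hp2
    · exact h
  rw [Fin.sum_univ_three]
  have h0 := hne 0
  have h1 := hne 1
  have h2 := hne 2
  field_simp
  linear_combination G

theorem stmt_11 (z : Fin 3 → ℂ) (hz : Function.Injective z)
    (m : Fin 3 → ℕ) (hm : ∀ j, 0 < m j)
    (f : ℂ → ℂ) (hf : ∀ x, f x = ∏ j, (x - z j) ^ (m j))
    (w₁ w₂ : ℂ) (hw : w₁ ≠ w₂)
    (hw₁ : deriv f w₁ = 0) (hw₁' : f w₁ ≠ 0)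
    (hw₂ : deriv f w₂ = 0) (hw₂' : f w₂ ≠ 0) :
    let v₁ : Fin 3 → ℂ := fun j => (Real.sqrt (m j) : ℂ) / (w₁ - z j)
    let v₂ : Fin 3 → ℂ := fun j =>
      starRingEnd ℂ ((Real.sqrt (m j) : ℂ) / (w₂ - z j))
    let v₃ : Fin 3 → ℂ := fun j => (Real.sqrt (m j) : ℂ)
    (∑ j, starRingEnd ℂ (v₁ j) * v₂ j = 0) ∧
    (∑ j, starRingEnd ℂ (v₁ j) * v₃ j = 0) ∧
    (∑ j, starRingEnd ℂ (v₂ j) * v₃ j = 0) := by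
  intro v₁ v₂ v₃
  have S₁ := stmt_11_key z m hm f hf w₁ hw₁' hw₁
  have S₂ := stmt_11_key z m hm f hf w₂ hw₂' hw₂
  have hne₁ : ∀ j, w₁ - z j ≠ 0 := by
    intro j h
    apply hw₁'
    rw [hf]
    exact Finset.prod_eq_zero (Finset.mem_univ j) (by rw [h, zero_pow (hm j).ne'])
  have hne₂ : ∀ j, w₂ - z j ≠ 0 := by
    intro j h
    apply hw₂'
    rw [hf]
    exact Finset.prod_eq_zero (Finset.mem_univ j) (by rw [h, zero_pow (hm j).ne'])
  have hsq : ∀ j, (Real.sqrt (m j) : ℂ) * (Real.sqrt (m j) : ℂ) = (m j : ℂ) := by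
    intro j
    rw [← Complex.ofReal_mul, Real.mul_self_sqrt (Nat.cast_nonneg _)]
    norm_cast
  -- cross sum
  have T : ∑ j, (m j : ℂ) / ((w₁ - z j) * (w₂ - z j)) = 0 := by
    have hw' : w₂ - w₁ ≠ 0 := sub_ne_zero.mpr (Ne.symm hw)
    have key : (w₂ - w₁) * ∑ j, (m j : ℂ) / ((w₁ - z j) * (w₂ - z j))
        = ∑ j, (m j : ℂ) / (w₁ - z j) - ∑ j, (m j : ℂ) / (w₂ - z j) := by
      rw [Finset.mul_sum, ← Finset.sum_sub_distrib]
      apply Finset.sum_congr rfl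
      intro j _
      have h1 := hne₁ j
      have h2 := hne₂ j
      field_simp
      ring
    rw [S₁, S₂, sub_self] at key
    exact (mul_eq_zero.mp key).resolve_left hw'
  refine ⟨?_, ?_, ?_⟩
  · have : ∑ j, starRingEnd ℂ (v₁ j) * v₂ j
        = starRingEnd ℂ (∑ j, (m j : ℂ) / ((w₁ - z j) * (w₂ - z j))) := by
      rw [map_sum]
      apply Finset.sum_congr rfl
      intro j _
      simp only [v₁, v₂, ← map_mul]
      congr 1
      rw [div_mul_div_comm, hsq]
    rw [this, T, map_zero]
  · have : ∑ j, starRingEnd ℂ (v₁ j) * v₃ j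
        = starRingEnd ℂ (∑ j, (m j : ℂ) / (w₁ - z j)) := by
      rw [map_sum]
      apply Finset.sum_congr rfl
      intro j _
      simp only [v₁, v₃]
      rw [show ((m j : ℂ) / (w₁ - z j)) = ((Real.sqrt (m j) : ℂ) / (w₁ - z j)) * (Real.sqrt (m j) : ℂ) by
        rw [div_mul_eq_mul_div, mul_comm, hsq]]
      rw [map_mul, Complex.conj_ofReal]
    rw [this, S₁, map_zero]
  · have : ∑ j, starRingEnd ℂ (v₂ j) * v₃ j = ∑ j, (m j : ℂ) / (w₂ - z j) := by
      apply Finset.sum_congr rfl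
      intro j _
      simp only [v₂, v₃, Complex.conj_conj]
      rw [div_mul_eq_mul_div, mul_comm, hsq]
    rw [this, S₂]
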